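/- Let E be a complex Hilbert space and let D₀ be a bounded, normal, invertible operator on E with D₀*D₀ ≥ ρ²·1 for some ρ > 0. Let |D₀| denote the positive square root of D₀*D₀ and set F = D₀·|D₀|⁻¹. Then F is unitary, and for every λ ∈ [0,1] the operator X_λ = (1−λ)ρF + λD₀ satisfies X_λ*X_λ ≥ ρ²·1 and X_λX_λ* ≥ ρ²·1; in particular X_λ is invertible. -/

import Mathlib

/-- For a bounded normal invertible operator `D₀` with `D₀*D₀ ≥ ρ²·1`, the phase
`F = D₀|D₀|⁻¹` (with `|D₀| = √(D₀*D₀)` given by the continuous functional calculus) is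
unitary, and for every `λ ∈ [0,1]` the operator `X_λ = (1−λ)ρF + λD₀` satisfies
`X_λ*X_λ ≥ ρ²·1` and `X_λX_λ* ≥ ρ²·1`; in particular `X_λ` is invertible. -/
theorem phase_path_lower_bound {E : Type*} [NormedAddCommGroup E] [InnerProductSpace ℂ E]
    [CompleteSpace E] (D₀ : E →L[ℂ] E) (hD₀ : IsStarNormal D₀) (hD₀inv : IsUnit D₀)
    (ρ : ℝ) (hρ : 0 < ρ)
    (hD₀low : ((ρ ^ 2 : ℝ) : ℂ) • (1 : E →L[ℂ] E) ≤ ContinuousLinearMap.adjoint D₀ * D₀) :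
    D₀ * Ring.inverse (cfc Real.sqrt (ContinuousLinearMap.adjoint D₀ * D₀)) ∈
      unitary (E →L[ℂ] E) ∧
    ∀ t ∈ Set.Icc (0 : ℝ) 1,
      (((ρ ^ 2 : ℝ) : ℂ) • (1 : E →L[ℂ] E) ≤
        ContinuousLinearMap.adjoint
            ((((1 - t) * ρ : ℝ) : ℂ) •
                (D₀ * Ring.inverse (cfc Real.sqrt (ContinuousLinearMap.adjoint D₀ * D₀))) +
              (t : ℂ) • D₀) *
          ((((1 - t) * ρ : ℝ) : ℂ) •
              (D₀ * Ring.inverse (cfc Real.sqrt (ContinuousLinearMap.adjoint D₀ * D₀))) +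
            (t : ℂ) • D₀)) ∧
      (((ρ ^ 2 : ℝ) : ℂ) • (1 : E →L[ℂ] E) ≤
        ((((1 - t) * ρ : ℝ) : ℂ) •
              (D₀ * Ring.inverse (cfc Real.sqrt (ContinuousLinearMap.adjoint D₀ * D₀))) +
            (t : ℂ) • D₀) *
          ContinuousLinearMap.adjoint
            ((((1 - t) * ρ : ℝ) : ℂ) •
                (D₀ * Ring.inverse (cfc Real.sqrt (ContinuousLinearMap.adjoint D₀ * D₀))) +
              (t : ℂ) • D₀)) ∧
      IsUnit
        ((((1 - t) * ρ : ℝ) : ℂ) •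
            (D₀ * Ring.inverse (cfc Real.sqrt (ContinuousLinearMap.adjoint D₀ * D₀))) +
          (t : ℂ) • D₀) := by
  simp only [← ContinuousLinearMap.star_eq_adjoint] at hD₀low ⊢
  set A : E →L[ℂ] E := star D₀ * D₀ with hAdef
  have hAnn : (0 : E →L[ℂ] E) ≤ A := star_mul_self_nonneg D₀
  have hAsa : IsSelfAdjoint A := .of_nonneg hAnn
  have hAunit : IsUnit A := hD₀inv.star.mul hD₀inv
  have hAlow : algebraMap ℝ (E →L[ℂ] E) (ρ ^ 2) ≤ A := by
    rwa [Algebra.algebraMap_eq_smul_one, ← Complex.coe_smul]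
  have hspec : ∀ x ∈ spectrum ℝ A, ρ ^ 2 ≤ x :=
    (algebraMap_le_iff_le_spectrum (r := ρ ^ 2) (a := A) hAsa).mp hAlow
  have hsq : ∀ x ∈ spectrum ℝ A, ρ ≤ Real.sqrt x := by
    intro x hx
    rw [← Real.sqrt_sq hρ.le]
    exact Real.sqrt_le_sqrt (hspec x hx)
  set M : E →L[ℂ] E := cfc Real.sqrt A with hMdef
  have hMsa : IsSelfAdjoint M := cfc_predicate _ _
  have hMM : M * M = A := by
    rw [hMdef, ← cfc_mul Real.sqrt Real.sqrt A]
    refine (cfc_congr (g := fun x : ℝ => x) ?_).trans (cfc_id' ℝ A hAsa)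
    intro x hx
    exact Real.mul_self_sqrt (le_trans (by positivity) (hspec x hx))
  have hMunit : IsUnit M := by
    refine isUnit_cfc (R := ℝ) Real.sqrt A (by fun_prop) hAsa ?_
    intro x hx
    exact (lt_of_lt_of_le hρ (hsq x hx)).ne'
  set N : E →L[ℂ] E := Ring.inverse M with hNdef
  have hNM : N * M = 1 := Ring.inverse_mul_cancel M hMunit
  have hMN : M * N = 1 := Ring.mul_inverse_cancel M hMunit
  have hNsa : IsSelfAdjoint N := by
    rw [IsSelfAdjoint, hNdef, ← Ring.inverse_star, hMsa.star_eq]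
  set F : E →L[ℂ] E := D₀ * N with hFdef
  have hFM : F * M = D₀ := by rw [hFdef, mul_assoc, hNM, mul_one]
  have hFstarF : star F * F = 1 := by
    rw [hFdef, star_mul, hNsa.star_eq, mul_assoc, ← mul_assoc (star D₀) D₀ N,
      ← hAdef, ← hMM, mul_assoc M M N, hMN, mul_one, hNM]
  have hcomm : D₀ * A = A * D₀ := by
    rw [hAdef, ← mul_assoc, ← star_comm_self']
  have hcommInv : D₀ * Ring.inverse A = Ring.inverse A * D₀ := by
    have h := congrArg (fun z => Ring.inverse A * (z * Ring.inverse A)) hcomm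
    rw [Ring.mul_inverse_cancel_right A D₀ hAunit] at h
    rw [mul_assoc A D₀ (Ring.inverse A),
      Ring.inverse_mul_cancel_left A (D₀ * Ring.inverse A) hAunit] at h
    exact h.symm
  have hNN : N * N = Ring.inverse A := by
    rw [← hMM, Ring.mul_inverse_rev' (Commute.refl M), ← hNdef]
  have hFFstar : F * star F = 1 := by
    rw [hFdef, star_mul, hNsa.star_eq, mul_assoc, ← mul_assoc N N (star D₀), hNN,
      ← mul_assoc, hcommInv, mul_assoc, ← star_comm_self', ← hAdef,
      Ring.inverse_mul_cancel A hAunit]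
  have hFunit : IsUnit F := ⟨⟨F, star F, hFFstar, hFstarF⟩, rfl⟩
  refine ⟨(Unitary.mem_iff).mpr ⟨hFstarF, hFFstar⟩, ?_⟩
  intro t ht
  obtain ⟨ht0, ht1⟩ := ht
  set g : ℝ → ℝ := fun x => (1 - t) * ρ + t * Real.sqrt x with hgdef
  have hgle : ∀ x ∈ spectrum ℝ A, ρ ≤ g x := by
    intro x hx
    have := hsq x hx
    simp only [hgdef]
    nlinarith
  set B : E →L[ℂ] E := cfc g A with hBdef
  have hBsa : IsSelfAdjoint B := cfc_predicate _ _
  have hBunit : IsUnit B := by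
    refine isUnit_cfc (R := ℝ) g A (by fun_prop) hAsa ?_
    intro x hx
    exact (lt_of_lt_of_le hρ (hgle x hx)).ne'
  have hBeq : B = algebraMap ℝ (E →L[ℂ] E) ((1 - t) * ρ) + t • M := by
    rw [hBdef, hgdef]
    rw [cfc_add (a := A) (fun _ => (1 - t) * ρ) (fun x => t * Real.sqrt x) (by fun_prop) (by fun_prop)]
    rw [cfc_const ((1 - t) * ρ) A hAsa, cfc_const_mul t Real.sqrt A (by fun_prop)]
  have hB2 : algebraMap ℝ (E →L[ℂ] E) (ρ ^ 2) ≤ B * B := by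
    rw [hBdef, ← cfc_mul g g A (by fun_prop) (by fun_prop)]
    rw [algebraMap_le_cfc_iff _ _ A (by fun_prop) hAsa]
    intro x hx
    have := hgle x hx
    nlinarith
  have hXeq : (((1 - t) * ρ : ℝ) : ℂ) • F + (t : ℂ) • D₀ = F * B := by
    rw [hBeq, mul_add, Complex.coe_smul, Complex.coe_smul,
      Algebra.algebraMap_eq_smul_one, mul_smul_comm, mul_one, mul_smul_comm, hFM]
  rw [hXeq]
  have hstarX : star (F * B) = B * star F := by rw [star_mul, hBsa.star_eq]
  have hXX : star (F * B) * (F * B) = B * B := by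
    rw [hstarX, mul_assoc, ← mul_assoc (star F) F B, hFstarF, one_mul]
  have hcoe : ((ρ ^ 2 : ℝ) : ℂ) • (1 : E →L[ℂ] E) = algebraMap ℝ (E →L[ℂ] E) (ρ ^ 2) := by
    rw [Complex.coe_smul, Algebra.algebraMap_eq_smul_one]
  refine ⟨?_, ?_, hFunit.mul hBunit⟩
  · rw [hXX, hcoe]; exact hB2
  · have h8 := star_right_conjugate_le_conjugate hB2 F
    have h9 : F * algebraMap ℝ (E →L[ℂ] E) (ρ ^ 2) * star F
        = ((ρ ^ 2 : ℝ) : ℂ) • (1 : E →L[ℂ] E) := by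
      rw [Algebra.algebraMap_eq_smul_one, mul_smul_comm, mul_one, smul_mul_assoc, hFFstar,
        Complex.coe_smul]
    have h10 : (F * B) * star (F * B) = F * (B * B) * star F := by
      rw [hstarX, mul_assoc F B (B * star F), ← mul_assoc B B (star F),
        ← mul_assoc F (B * B) (star F)]
    rw [h10, ← h9]
    exact h8
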